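/- Let M be a set of N nonnegative integers and let 0 < t_1 < t_2 < ... < t_N be real numbers. If a polynomial P with real coefficients, all of whose exponents lie in M, vanishes at every point (-1)^k * t_k for k = 1, ..., N, then P is identically zero. -/

import Mathlib

open Polynomial Finset

noncomputable def opd (P : ℝ[X]) (m : ℕ) : ℝ[X] := X * derivative P - C (m:ℝ) * P

lemma opd_coeff (P : ℝ[X]) (m i : ℕ) : (opd P m).coeff i = P.coeff i * ((i:ℝ) - (m:ℝ)) := by
  rcases i with _ | j
  · simp [opd, coeff_mul_C, mul_comm]
  · simp [opd, coeff_X_mul, coeff_derivative]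
    ring

lemma opd_support (P : ℝ[X]) (m : ℕ) : (opd P m).support = P.support.erase m := by
  ext i
  have hcast : ((i:ℝ) ≠ (m:ℝ)) ↔ i ≠ m := Nat.cast_injective.ne_iff
  simp only [mem_support_iff, opd_coeff, mem_erase, mul_ne_zero_iff, sub_ne_zero, hcast]
  tauto

lemma opd_eval_zero (P : ℝ[X]) (m : ℕ) {c : ℝ} (hc : 0 < c)
    (hd : deriv (fun x => P.eval x / x ^ m) c = 0) : (opd P m).eval c = 0 := by
  have hne : (c:ℝ) ^ m ≠ 0 := pow_ne_zero _ hc.ne'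
  have h1 : HasDerivAt (fun x => P.eval x / x ^ m)
      ((P.derivative.eval c * c ^ m - P.eval c * ((m:ℝ) * c ^ (m-1))) / (c ^ m) ^ 2) c :=
    (P.hasDerivAt c).div (hasDerivAt_pow m c) hne
  have h3 : P.derivative.eval c * c ^ m - P.eval c * ((m:ℝ) * c ^ (m-1)) = 0 := by
    have h2 := hd; rw [h1.deriv] at h2
    field_simp at h2
    linear_combination h2
  have heq : (opd P m).eval c = c * P.derivative.eval c - (m:ℝ) * P.eval c := by
    simp [opd]
  rw [heq]
  rcases m with _ | j
  · simp only [pow_zero, Nat.cast_zero, zero_mul, mul_zero, mul_one, sub_zero] at h3 ⊢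
    rw [h3, mul_zero]
  · have hj : (j+1) - 1 = j := rfl
    rw [hj] at h3
    have hcj : (c:ℝ) ^ j ≠ 0 := pow_ne_zero _ hc.ne'
    have key : (c * P.derivative.eval c - ((j:ℝ)+1) * P.eval c) * c ^ j = 0 := by
      push_cast at h3
      linear_combination h3
    rcases mul_eq_zero.mp key with h | h
    · push_cast
      linarith [h]
    · exact absurd h hcj


lemma rolle_pos (P : ℝ[X]) (m : ℕ) :
    ∀ (n : ℕ) (S : Finset ℝ), S.card = n → (∀ x ∈ S, 0 < x ∧ P.eval x = 0) →
    ∃ T : Finset ℝ, n ≤ T.card + 1 ∧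
      ∀ y ∈ T, (opd P m).eval y = 0 ∧ ∃ a ∈ S, 0 < a ∧ a < y := by
  intro n
  induction n with
  | zero => exact fun S _ _ => ⟨∅, by simp, by simp⟩
  | succ k ih =>
    intro S hcard hS
    rcases Nat.eq_zero_or_pos k with hk | hk
    · exact ⟨∅, by omega, by simp⟩
    have hne : S.Nonempty := card_pos.mp (by omega)
    set a := S.min' hne with ha_def
    have haS : a ∈ S := S.min'_mem hne
    set S₂ := S.erase a with hS₂_def
    have hcard₂ : S₂.card = k := by rw [hS₂_def, card_erase_of_mem haS, hcard]; omega
    have hne₂ : S₂.Nonempty := card_pos.mp (by omega)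
    set b := S₂.min' hne₂ with hb_def
    have hbS₂ : b ∈ S₂ := S₂.min'_mem hne₂
    have hbS : b ∈ S := mem_of_mem_erase hbS₂
    have hab : a < b := lt_of_le_of_ne (S.min'_le b hbS) (Ne.symm (mem_erase.mp hbS₂).1)
    obtain ⟨ha0, haP⟩ := hS a haS
    obtain ⟨hb0, hbP⟩ := hS b hbS
    -- Rolle on g = P(x)/x^m on [a,b]
    have hcont : ContinuousOn (fun x => P.eval x / x ^ m) (Set.Icc a b) := by
      apply ContinuousOn.div (P.continuous.continuousOn) ((continuous_pow m).continuousOn)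
      intro x hx
      exact pow_ne_zero _ (ne_of_gt (lt_of_lt_of_le ha0 hx.1))
    have hval : (fun x => P.eval x / x ^ m) a = (fun x => P.eval x / x ^ m) b := by
      simp [haP, hbP]
    obtain ⟨c, hcmem, hcd⟩ := exists_deriv_eq_zero hab hcont hval
    have hc0 : 0 < c := ha0.trans hcmem.1
    have hcroot : (opd P m).eval c = 0 := opd_eval_zero P m hc0 hcd
    obtain ⟨T₂, hT₂card, hT₂⟩ := ih S₂ hcard₂ (fun x hx => hS x (mem_of_mem_erase hx))
    have hcnot : c ∉ T₂ := by
      intro hmem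
      obtain ⟨-, a', ha'S₂, -, ha'lt⟩ := hT₂ c hmem
      have : b ≤ a' := S₂.min'_le a' ha'S₂
      have : b < c := lt_of_le_of_lt this ha'lt
      exact absurd hcmem.2 (not_lt.mpr this.le)
    refine ⟨insert c T₂, ?_, ?_⟩
    · rw [card_insert_of_notMem hcnot]; omega
    · intro y hy
      rcases mem_insert.mp hy with rfl | hy₂
      · exact ⟨hcroot, a, haS, ha0, hcmem.1⟩
      · obtain ⟨hroot, a', ha'S₂, ha'0, ha'lt⟩ := hT₂ y hy₂
        exact ⟨hroot, a', mem_of_mem_erase ha'S₂, ha'0, ha'lt⟩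

lemma descartes : ∀ (k : ℕ) (P : ℝ[X]), P ≠ 0 →
    ∀ S : Finset ℝ, S.card = k → (∀ x ∈ S, 0 < x ∧ P.eval x = 0) →
    k < P.support.card := by
  intro k
  induction k with
  | zero =>
    intro P hP S _ _
    exact card_pos.mpr (Polynomial.support_nonempty.mpr hP)
  | succ k ih =>
    intro P hP S hcard hS
    set m := P.natTrailingDegree with hm_def
    have hm : m ∈ P.support := natTrailingDegree_mem_support_of_nonzero hP
    by_cases hmono : P.support.card ≤ 1
    · exfalso
      have hsing : P.support = {m} := by
        apply Finset.eq_singleton_iff_unique_mem.mpr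
        exact ⟨hm, fun y hy => Finset.card_le_one.mp hmono y hy m hm⟩
      have hne : S.Nonempty := card_pos.mp (by omega)
      obtain ⟨x, hxS⟩ := hne
      obtain ⟨hx0, hxP⟩ := hS x hxS
      have : P.eval x = P.coeff m * x ^ m := by
        rw [eval_eq_sum, sum_def, hsing, Finset.sum_singleton]
      rw [hxP] at this
      have hc : P.coeff m ≠ 0 := mem_support_iff.mp hm
      have : P.coeff m * x ^ m ≠ 0 := mul_ne_zero hc (pow_ne_zero _ hx0.ne')
      exact this (by linarith)
    · push_neg at hmono
      have hopne : opd P m ≠ 0 := by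
        rw [← Polynomial.support_nonempty, opd_support P m, ← card_pos,
          card_erase_of_mem hm]
        omega
      obtain ⟨T, hTcard, hT⟩ := rolle_pos P m (k+1) S hcard hS
      obtain ⟨T', hT'sub, hT'card⟩ := Finset.exists_subset_card_eq (show k ≤ T.card by omega)
      have hlt := ih (opd P m) hopne T' hT'card (fun x hx => by
        obtain ⟨hroot, a, -, ha0, halt⟩ := hT x (hT'sub hx)
        exact ⟨ha0.trans halt, hroot⟩)
      rw [opd_support P m, card_erase_of_mem hm] at hlt
      omega

section parts
variable (P : ℝ[X])

noncomputable def evp : ℝ[X] := ∑ i ∈ P.support.filter (fun i => Even i), monomial i (P.coeff i)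
noncomputable def odp : ℝ[X] := ∑ i ∈ P.support.filter (fun i => ¬ Even i), monomial i (P.coeff i)

lemma coeff_sum_monomial (F : Finset ℕ) (j : ℕ) :
    (∑ i ∈ F, monomial i (P.coeff i)).coeff j = if j ∈ F then P.coeff j else 0 := by
  rw [finset_sum_coeff]
  simp only [coeff_monomial]
  exact Finset.sum_ite_eq' F j (fun i => P.coeff i)

lemma support_sum_monomial (F : Finset ℕ) (hF : F ⊆ P.support) :
    (∑ i ∈ F, monomial i (P.coeff i)).support = F := by
  ext j
  rw [mem_support_iff, coeff_sum_monomial]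
  constructor
  · intro h
    by_contra hj
    simp [hj] at h
  · intro hj
    simp only [hj, if_true]
    exact mem_support_iff.mp (hF hj)

lemma evp_add_odp : evp P + odp P = P := by
  rw [evp, odp, Finset.sum_filter_add_sum_filter_not]
  exact (P.as_sum_support).symm

lemma eval_sum_monomial (F : Finset ℕ) (x : ℝ) :
    (∑ i ∈ F, monomial i (P.coeff i)).eval x = ∑ i ∈ F, P.coeff i * x ^ i := by
  rw [eval_finset_sum]
  simp [eval_monomial]

lemma evp_eval_neg (x : ℝ) : (evp P).eval (-x) = (evp P).eval x := by
  rw [evp, eval_sum_monomial, eval_sum_monomial]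
  apply Finset.sum_congr rfl
  intro i hi
  rw [(Finset.mem_filter.mp hi).2.neg_pow]

lemma odp_eval_neg (x : ℝ) : (odp P).eval (-x) = -((odp P).eval x) := by
  rw [odp, eval_sum_monomial, eval_sum_monomial, ← Finset.sum_neg_distrib]
  apply Finset.sum_congr rfl
  intro i hi
  have hodd : Odd i := Nat.not_even_iff_odd.mp (Finset.mem_filter.mp hi).2
  rw [hodd.neg_pow]
  ring

lemma evp_support (P : ℝ[X]) : (evp P).support = P.support.filter (fun i => Even i) :=
  support_sum_monomial P _ (Finset.filter_subset _ _)

lemma odp_support (P : ℝ[X]) : (odp P).support = P.support.filter (fun i => ¬ Even i) :=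
  support_sum_monomial P _ (Finset.filter_subset _ _)

end parts


theorem stmt_1 (N : ℕ) (M : Finset ℕ) (hM : M.card = N)
    (t : Fin N → ℝ) (ht : StrictMono t) (hpos : ∀ k, 0 < t k)
    (P : Polynomial ℝ) (hsupp : P.support ⊆ M)
    (hz : ∀ k : Fin N, P.eval ((-1 : ℝ) ^ ((k : ℕ) + 1) * t k) = 0) : P = 0 := by
  by_contra hP
  set A := evp P with hA_def
  set B := odp P with hB_def
  have hAB : A + B = P := evp_add_odp P
  have hsuppN : P.support.card ≤ N := hM ▸ Finset.card_le_card hsupp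
  -- key sign relation
  have hkey : ∀ k : Fin N, A.eval (t k) = (-1:ℝ)^(k:ℕ) * B.eval (t k) := by
    intro k
    have hzk := hz k
    rcases Nat.even_or_odd ((k:ℕ)+1) with he | ho
    · rw [he.neg_one_pow, one_mul, ← hAB, eval_add] at hzk
      have hko : Odd (k:ℕ) := by
        rcases Nat.even_add_one.mp he with h
        exact Nat.not_even_iff_odd.mp h
      rw [hko.neg_one_pow]
      linarith
    · rw [ho.neg_one_pow, neg_one_mul, ← hAB, eval_add, evp_eval_neg, odp_eval_neg] at hzk
      have hke : Even (k:ℕ) := by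
        rcases Nat.even_or_odd (k:ℕ) with h | h
        · exact h
        · exact absurd (h.add_one) (Nat.not_even_iff_odd.mpr ho)
      rw [hke.neg_one_pow, one_mul]
      linarith
  by_cases hpure : (A = 0 ∨ B = 0)
  · -- pure parity case: all t k are roots of P
    have hPeval : ∀ k : Fin N, P.eval (t k) = 0 := by
      intro k
      have hk := hkey k
      rw [← hAB, eval_add]
      rcases hpure with h0 | h0
      · rw [h0] at hk ⊢
        simp only [eval_zero, zero_add] at hk ⊢
        rcases Nat.even_or_odd (k:ℕ) with hpar | hpar
        · rw [hpar.neg_one_pow, one_mul] at hk; linarith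
        · rw [hpar.neg_one_pow] at hk; linarith
      · rw [h0] at hk ⊢
        simp only [eval_zero, mul_zero] at hk
        simp [hk]
    set S := Finset.image t Finset.univ with hS_def
    have hScard : S.card = N := by
      rw [hS_def, Finset.card_image_of_injective _ ht.injective, Finset.card_univ,
        Fintype.card_fin]
    have := descartes N P hP S hScard (by
      intro x hx
      obtain ⟨k, -, rfl⟩ := Finset.mem_image.mp hx
      exact ⟨hpos k, hPeval k⟩)
    omega
  · push_neg at hpure
    obtain ⟨hA0, hB0⟩ := hpure
    have heo : A.support.card + B.support.card = P.support.card := by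
      rw [hA_def, hB_def, evp_support, odp_support]
      exact Finset.card_filter_add_card_filter_not (fun i => Even i)
    have hAcard : 1 ≤ A.support.card := card_pos.mpr (support_nonempty.mpr hA0)
    have hBcard : 1 ≤ B.support.card := card_pos.mpr (support_nonempty.mpr hB0)
    have hN2 : 2 ≤ N := by omega
    -- gap witnesses
    have hwit : ∀ (i : ℕ) (hi : i + 1 < N), ∃ (x : ℝ) (tgv : Bool),
        (t ⟨i, by omega⟩ ≤ x ∧ x ≤ t ⟨i+1, hi⟩) ∧
        (tgv = true → A.eval x = 0) ∧ (tgv = false → B.eval x = 0) ∧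
        (x = t ⟨i, by omega⟩ → tgv = true) ∧ (x = t ⟨i+1, hi⟩ → tgv = false) := by
      intro i hi
      set a := t ⟨i, by omega⟩ with ha_def
      set b := t ⟨i+1, hi⟩ with hb_def
      have hab : a < b := ht (Fin.mk_lt_mk.mpr (Nat.lt_succ_self i))
      by_cases h1 : ∃ x, x ∈ Set.Ioo a b ∧ B.eval x = 0
      · obtain ⟨x, hx, hxB⟩ := h1
        exact ⟨x, false, ⟨hx.1.le, hx.2.le⟩, fun h => by simp at h, fun _ => hxB,
          fun h => absurd h.symm (ne_of_lt hx.1), fun h => absurd h (ne_of_lt hx.2)⟩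
      · by_cases h2 : B.eval b = 0
        · exact ⟨b, false, ⟨hab.le, le_refl b⟩, fun h => by simp at h, fun _ => h2,
            fun h => absurd h (ne_of_gt hab), fun _ => rfl⟩
        · by_cases h3 : B.eval a = 0
          · refine ⟨a, true, ⟨le_refl a, hab.le⟩, fun _ => ?_, fun h => by simp at h,
              fun _ => rfl, fun h => absurd h (ne_of_lt hab)⟩
            have hka : A.eval a = (-1:ℝ)^i * B.eval a := hkey ⟨i, by omega⟩
            rw [hka, h3, mul_zero]
          · have hka : A.eval a = (-1:ℝ)^i * B.eval a := hkey ⟨i, by omega⟩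
            have hkb : A.eval b = (-1:ℝ)^(i+1) * B.eval b := hkey ⟨i+1, hi⟩
            have hm1 : ((-1:ℝ))^i * (-1:ℝ)^(i+1) = -1 := by
              rw [← pow_add]
              exact Odd.neg_one_pow ⟨i, by ring⟩
            have hprodeq : (A.eval a * B.eval a) * (A.eval b * B.eval b)
                = -((B.eval a)^2 * (B.eval b)^2) := by
              rw [hka, hkb]
              linear_combination ((B.eval a)^2 * (B.eval b)^2) * hm1
            have hprod : (A.eval a * B.eval a) * (A.eval b * B.eval b) < 0 := by
              rw [hprodeq]
              have h2a : (0:ℝ) < (B.eval a)^2 := by positivity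
              have h2b : (0:ℝ) < (B.eval b)^2 := by positivity
              nlinarith
            have hcont : ContinuousOn (fun x => A.eval x * B.eval x) (Set.Icc a b) :=
              (A.continuous.mul B.continuous).continuousOn
            have hex : ∃ x ∈ Set.Ioo a b, A.eval x * B.eval x = 0 := by
              rcases mul_neg_iff.mp hprod with ⟨hpa, hpb⟩ | ⟨hpa, hpb⟩
              · obtain ⟨x, hx, hx0⟩ := intermediate_value_Ioo' hab.le hcont ⟨hpb, hpa⟩
                exact ⟨x, hx, hx0⟩
              · obtain ⟨x, hx, hx0⟩ := intermediate_value_Ioo hab.le hcont ⟨hpa, hpb⟩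
                exact ⟨x, hx, hx0⟩
            obtain ⟨x, hx, hx0⟩ := hex
            have hxA : A.eval x = 0 := by
              rcases mul_eq_zero.mp hx0 with h | h
              · exact h
              · exact absurd ⟨x, hx, h⟩ h1
            exact ⟨x, true, ⟨hx.1.le, hx.2.le⟩, fun _ => hxA, fun h => by simp at h,
              fun h => absurd h.symm (ne_of_lt hx.1), fun h => absurd h (ne_of_lt hx.2)⟩
    choose w tg hbd hwA hwB hL hR using hwit
    have pf : ∀ k : Fin (N-1), (k:ℕ)+1 < N := fun k => by have := k.2; omega
    set w' : Fin (N-1) → ℝ := fun k => w k.1 (pf k) with hw'_def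
    set tg' : Fin (N-1) → Bool := fun k => tg k.1 (pf k) with htg'_def
    have aux : ∀ k k' : Fin (N-1), (k:ℕ) < (k':ℕ) → w' k = w' k' → tg' k ≠ tg' k' := by
      intro k k' hlt heq
      have h1 : w' k ≤ t ⟨(k:ℕ)+1, pf k⟩ := (hbd k.1 (pf k)).2
      have h2 : t ⟨(k':ℕ), by have := pf k'; omega⟩ ≤ w' k' := (hbd k'.1 (pf k')).1
      have h3 : t ⟨(k:ℕ)+1, pf k⟩ ≤ t ⟨(k':ℕ), by have := pf k'; omega⟩ := by
        apply ht.monotone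
        exact Fin.mk_le_mk.mpr (by omega)
      have e1 : w' k = t ⟨(k:ℕ)+1, pf k⟩ :=
        le_antisymm h1 (le_trans h3 (by rw [← heq] at h2; exact h2))
      have e2 : w' k' = t ⟨(k':ℕ), by have := pf k'; omega⟩ :=
        le_antisymm (by rw [← heq, e1]; exact h3) h2
      have htgk : tg' k = false := hR k.1 (pf k) e1
      have htgk' : tg' k' = true := hL k'.1 (pf k') e2
      rw [htgk, htgk']
      simp
    have hinj : ∀ k k' : Fin (N-1), w' k = w' k' → tg' k = tg' k' → k = k' := by
      intro k k' heq htag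
      by_contra hne
      rcases lt_trichotomy (k:ℕ) (k':ℕ) with h | h | h
      · exact aux k k' h heq htag
      · exact hne (Fin.ext h)
      · exact aux k' k h heq.symm htag.symm
    classical
    set Sa : Finset ℝ :=
      ((Finset.univ : Finset (Fin (N-1))).filter (fun k => tg' k = true)).image w' with hSa
    set Sb : Finset ℝ :=
      ((Finset.univ : Finset (Fin (N-1))).filter (fun k => tg' k = false)).image w' with hSb
    have hSacard : Sa.card
        = ((Finset.univ : Finset (Fin (N-1))).filter (fun k => tg' k = true)).card := by
      apply Finset.card_image_of_injOn
      intro x hx y hy hxy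
      exact hinj x y hxy
        (by rw [(Finset.mem_filter.mp hx).2, (Finset.mem_filter.mp hy).2])
    have hSbcard : Sb.card
        = ((Finset.univ : Finset (Fin (N-1))).filter (fun k => tg' k = false)).card := by
      apply Finset.card_image_of_injOn
      intro x hx y hy hxy
      exact hinj x y hxy
        (by rw [(Finset.mem_filter.mp hx).2, (Finset.mem_filter.mp hy).2])
    have hpart : ((Finset.univ : Finset (Fin (N-1))).filter (fun k => tg' k = true)).card
        + ((Finset.univ : Finset (Fin (N-1))).filter (fun k => tg' k = false)).card
        = N - 1 := by
      have hp := Finset.card_filter_add_card_filter_not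
        (s := (Finset.univ : Finset (Fin (N-1)))) (p := fun k => tg' k = true)
      simpa [Bool.not_eq_true, Finset.card_univ, Fintype.card_fin] using hp
    have hSaroots : ∀ x ∈ Sa, 0 < x ∧ A.eval x = 0 := by
      intro x hx
      obtain ⟨k, hk, rfl⟩ := Finset.mem_image.mp hx
      refine ⟨lt_of_lt_of_le (hpos _) (hbd k.1 (pf k)).1, ?_⟩
      exact hwA k.1 (pf k) (Finset.mem_filter.mp hk).2
    have hSbroots : ∀ x ∈ Sb, 0 < x ∧ B.eval x = 0 := by
      intro x hx
      obtain ⟨k, hk, rfl⟩ := Finset.mem_image.mp hx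
      refine ⟨lt_of_lt_of_le (hpos _) (hbd k.1 (pf k)).1, ?_⟩
      exact hwB k.1 (pf k) (Finset.mem_filter.mp hk).2
    have hda := descartes Sa.card A hA0 Sa rfl hSaroots
    have hdb := descartes Sb.card B hB0 Sb rfl hSbroots
    omega
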